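/- Let G be an infinite virtually cyclic group which is isomorphic to a semidirect product G₀ ⋊_θ ℤ/2 for some torsion-free group G₀ and homomorphism θ : ℤ/2 → Aut(G₀). Then G is isomorphic either to ℤ × ℤ/2 or to the infinite dihedral group ℤ ⋊ ℤ/2 (the semidirect product in which the generator of ℤ/2 acts on ℤ by negation). -/

import Mathlib

/-- The automorphism of `ℤ` (written multiplicatively) given by negation. -/
def negAutZ : MulAut (Multiplicative ℤ) := MulEquiv.inv (Multiplicative ℤ)

lemma negAutZ_sq : negAutZ ^ 2 = 1 := by
  ext z
  simp [negAutZ, pow_succ]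

/-- The action of `ℤ/2` on `ℤ` in which the generator acts by negation. -/
def dihedralTwist : Multiplicative (ZMod 2) →* MulAut (Multiplicative ℤ) where
  toFun a := negAutZ ^ (Multiplicative.toAdd a).val
  map_one' := by
    show negAutZ ^ (Multiplicative.toAdd (1 : Multiplicative (ZMod 2))).val = 1
    simp
  map_mul' x y := by
    show negAutZ ^ (Multiplicative.toAdd x + Multiplicative.toAdd y).val = _
    rw [ZMod.val_add, ← pow_eq_pow_mod _ negAutZ_sq, pow_add]

/-- The infinite dihedral group, as the semidirect product `ℤ ⋊ ℤ/2` where the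
generator of `ℤ/2` acts on `ℤ` by negation. -/
abbrev InfiniteDihedral : Type := Multiplicative ℤ ⋊[dihedralTwist] Multiplicative (ZMod 2)

/-- A witness that `G` is isomorphic to a semidirect product `G₀ ⋊ ℤ/2` with `G₀`
torsion-free. -/
structure TorsionFreeByZTwoWitness (G : Type) [Group G] where
  G₀ : Type
  [grp : Group G₀]
  θ : Multiplicative (ZMod 2) →* MulAut G₀
  torsionFree : ∀ g : G₀, g ≠ 1 → ¬IsOfFinOrder g
  iso : G ≃* (G₀ ⋊[θ] Multiplicative (ZMod 2))

open Subgroup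

lemma negAutZ_apply (z : Multiplicative ℤ) : negAutZ z = z⁻¹ := rfl

lemma mulAutZ_classify (σ : MulAut (Multiplicative ℤ)) : σ = 1 ∨ σ = negAutZ := by
  set k : ℤ := Multiplicative.toAdd (σ (Multiplicative.ofAdd 1)) with hk
  have hpow : ∀ n : ℤ, σ (Multiplicative.ofAdd n) = Multiplicative.ofAdd (n * k) := by
    intro n
    have h1 : (Multiplicative.ofAdd n) = (Multiplicative.ofAdd (1:ℤ)) ^ n := by
      rw [← ofAdd_zsmul]; simp
    rw [h1, map_zpow]
    have : σ (Multiplicative.ofAdd 1) = Multiplicative.ofAdd k := by simp [hk]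
    rw [this, ← ofAdd_zsmul, smul_eq_mul, mul_comm]
  have hsurj := σ.surjective (Multiplicative.ofAdd 1)
  obtain ⟨w, hw⟩ := hsurj
  have : Multiplicative.ofAdd ((Multiplicative.toAdd w) * k) = Multiplicative.ofAdd 1 := by
    rw [← hpow]; simpa using hw
  have hmk : (Multiplicative.toAdd w) * k = 1 := by exact_mod_cast Multiplicative.ofAdd.injective this
  have hku : k = 1 ∨ k = -1 := by
    rcases Int.isUnit_iff.mp (IsUnit.of_mul_eq_one (a := k) _ (by linarith [hmk] : k * Multiplicative.toAdd w = 1)) with h | h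
    · exact Or.inl h
    · exact Or.inr h
  rcases hku with h | h
  · left; ext z
    have := hpow (Multiplicative.toAdd z)
    simp [h] at this
    simpa using this
  · right; ext z
    have := hpow (Multiplicative.toAdd z)
    rw [h] at this
    simp only [mul_neg_one] at this
    rw [show Multiplicative.ofAdd (Multiplicative.toAdd z) = z from rfl] at this
    rw [negAutZ_apply]
    rw [this]
    rfl


section aux

variable {N N' H : Type*} [Group N] [Group N'] [Group H]

/-- Transport a semidirect product along an isomorphism of the kernel. -/
noncomputable def sdCongrLeft (e : N ≃* N') (θ : H →* MulAut N) (θ' : H →* MulAut N')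
    (hcompat : ∀ (h : H) (n : N), e (θ h n) = θ' h (e n)) :
    (N ⋊[θ] H) ≃* (N' ⋊[θ'] H) where
  toFun x := ⟨e x.left, x.right⟩
  invFun x := ⟨e.symm x.left, x.right⟩
  left_inv x := by cases x; simp
  right_inv x := by cases x; simp
  map_mul' a b := by
    ext
    · show e (a * b).left = _
      rw [SemidirectProduct.mul_left, map_mul, hcompat]
      rfl
    · rfl

/-- A semidirect product with trivial action is the direct product. -/
def sdTrivialIso (θ : H →* MulAut N) (h1 : ∀ (h : H) (n : N), θ h n = n) :
    (N ⋊[θ] H) ≃* N × H where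
  toFun x := (x.left, x.right)
  invFun p := ⟨p.1, p.2⟩
  left_inv x := by cases x; rfl
  right_inv p := rfl
  map_mul' a b := by
    simp only [SemidirectProduct.mul_left, SemidirectProduct.mul_right, h1, Prod.mk_mul_mk]

lemma sd_congr_hom {θ₁ θ₂ : H →* MulAut N} (h : θ₁ = θ₂) :
    Nonempty ((N ⋊[θ₁] H) ≃* (N ⋊[θ₂] H)) := by
  subst h; exact ⟨MulEquiv.refl _⟩

end aux

lemma zmod2_cases (a : Multiplicative (ZMod 2)) :
    a = 1 ∨ a = Multiplicative.ofAdd (1 : ZMod 2) := by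
  revert a; decide


lemma key_cyclic (G₀ : Type*) [Group G₀] [Infinite G₀]
    (htf : ∀ g : G₀, g ≠ 1 → ¬IsOfFinOrder g)
    (hvc : ∃ H : Subgroup G₀, IsCyclic H ∧ H.FiniteIndex) :
    ∃ z : G₀, Function.Injective (fun n : ℤ => z ^ n) ∧ ∀ x : G₀, ∃ n : ℤ, x = z ^ n := by
  classical
  -- torsion-free helpers
  have tf_pow : ∀ (x : G₀) (n : ℕ), n ≠ 0 → x ^ n = 1 → x = 1 := by
    intro x n hn hx
    by_contra hx1
    exact htf x hx1 (isOfFinOrder_iff_pow_eq_one.mpr ⟨n, Nat.pos_of_ne_zero hn, hx⟩)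
  have tf_inj : ∀ x : G₀, x ≠ 1 → Function.Injective (fun n : ℤ => x ^ n) := by
    intro x hx
    exact injective_zpow_iff_not_isOfFinOrder.mpr (htf x hx)
  obtain ⟨H, hHc, hHf⟩ := hvc
  haveI := hHc; haveI := hHf
  set N := H.normalCore with hN
  haveI : N.FiniteIndex := Subgroup.finiteIndex_normalCore H
  haveI : IsCyclic N := Subgroup.isCyclic_of_le H.normalCore_le
  haveI : Infinite N := by
    have hc0 : Nat.card N * N.index = Nat.card G₀ := N.card_mul_index
    have : Nat.card G₀ = 0 := Nat.card_eq_zero_of_infinite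
    rw [this, Nat.mul_eq_zero] at hc0
    rcases hc0 with h | h
    · rcases Nat.card_eq_zero.mp h with h | h
      · exact (h.false (⟨1, N.one_mem⟩ : {x // x ∈ N})).elim
      · exact h
    · exact absurd h FiniteIndex.index_ne_zero
  haveI : Nontrivial N := inferInstance
  obtain ⟨n₀, hn₀⟩ := IsCyclic.exists_generator (α := N)
  set g : G₀ := (n₀ : G₀) with hgdef
  have hgN : g ∈ N := n₀.2
  have hNg : N = Subgroup.zpowers g := by
    apply le_antisymm
    · intro x hx
      obtain ⟨k, hk⟩ := hn₀ ⟨x, hx⟩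
      refine Subgroup.mem_zpowers_iff.mpr ⟨k, ?_⟩
      have := congrArg (Subtype.val) hk
      simpa using this
    · exact Subgroup.zpowers_le.mpr hgN
  have hg1 : g ≠ 1 := by
    intro h
    have : N = ⊥ := by rw [hNg, h, Subgroup.zpowers_eq_bot]
    obtain ⟨x, hx⟩ := exists_ne (1 : N)
    apply hx
    have hx1 : (x : G₀) ∈ N := x.2
    have hx2 : (x : G₀) ∈ (⊥ : Subgroup G₀) := this ▸ hx1
    rw [Subgroup.mem_bot] at hx2
    exact Subtype.ext hx2
  have hginj := tf_inj g hg1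
  -- conjugation exponents
  have hconj : ∀ t : G₀, ∃ k : ℤ, t * g * t⁻¹ = g ^ k := by
    intro t
    have : t * g * t⁻¹ ∈ N := Subgroup.Normal.conj_mem inferInstance g hgN t
    rw [hNg] at this
    obtain ⟨k, hk⟩ := Subgroup.mem_zpowers_iff.mp this
    exact ⟨k, hk.symm⟩
  set c : G₀ → ℤ := fun t => (hconj t).choose with hcdef
  have hc : ∀ t, t * g * t⁻¹ = g ^ (c t) := fun t => (hconj t).choose_spec
  have hc_unique : ∀ t k, t * g * t⁻¹ = g ^ k → c t = k := by
    intro t k h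
    apply hginj
    simp only
    rw [← hc t, h]
  have hconj_zpow : ∀ (t : G₀) (m : ℤ), t * g ^ m * t⁻¹ = g ^ (c t * m) := by
    intro t m
    rw [← conj_zpow, hc t, ← zpow_mul]
  have hc_one : c 1 = 1 := hc_unique 1 1 (by simp)
  have hc_mul : ∀ s t, c (s * t) = c s * c t := by
    intro s t
    apply hc_unique
    have : s * t * g * (s * t)⁻¹ = s * (t * g * t⁻¹) * s⁻¹ := by group
    rw [this, hc t, hconj_zpow]
  have hc_mul_inv : ∀ t : G₀, c t * c t⁻¹ = 1 := by
    intro t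
    rw [← hc_mul]
    simp [hc_one]
  -- the sign character
  set χ : G₀ →* ℤˣ :=
    { toFun := fun t => ⟨c t, c t⁻¹, hc_mul_inv t, by rw [mul_comm]; exact hc_mul_inv t⟩
      map_one' := by ext; simp [hc_one]
      map_mul' := fun s t => by ext; exact hc_mul s t } with hχ
  have hχval : ∀ t, ((χ t : ℤˣ) : ℤ) = c t := fun t => rfl
  haveI : Finite χ.range := inferInstance
  haveI : χ.ker.FiniteIndex := Subgroup.finiteIndex_ker χ
  set Cs := χ.ker with hCsdef
  have hCs_mem : ∀ t, t ∈ Cs ↔ c t = 1 := by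
    intro t
    rw [hCsdef, MonoidHom.mem_ker, Units.ext_iff, hχval]
    rfl
  have hgCs : g ∈ Cs := (hCs_mem g).mpr (hc_unique g 1 (by simp))
  have hCs_conj_g : ∀ t ∈ Cs, t * g * t⁻¹ = g := by
    intro t ht
    rw [hc t, (hCs_mem t).1 ht, zpow_one]
  set gc : Cs := ⟨g, hgCs⟩ with hgc
  -- torsion-free inside Cs
  have tfC : ∀ (x : Cs) (n : ℕ), n ≠ 0 → x ^ n = 1 → x = 1 := by
    intro x n hn hx
    have : (x : G₀) ^ n = 1 := by
      have := congrArg (Subtype.val) hx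
      simpa using this
    exact Subtype.ext (tf_pow _ n hn this)
  -- gc is central in Cs
  have hcomm_g : ∀ x : Cs, x * gc = gc * x := by
    intro x
    apply Subtype.ext
    have h1 := hCs_conj_g (x : G₀) x.2
    have : (x : G₀) * g = g * (x : G₀) := by
      have := congrArg (· * (x : G₀)) h1
      simpa [mul_assoc] using this
    simpa using this
  have hcenter_le : Subgroup.zpowers gc ≤ Subgroup.center Cs :=
    Subgroup.zpowers_le.mpr (Subgroup.mem_center_iff.mpr fun x => hcomm_g x)
  -- finite index of zpowers gc in Cs
  haveI hfg : (Subgroup.zpowers g).FiniteIndex := hNg ▸ ‹N.FiniteIndex›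
  have hzpg : (Subgroup.zpowers g).subgroupOf Cs = Subgroup.zpowers gc := by
    ext x
    simp only [Subgroup.mem_subgroupOf, Subgroup.mem_zpowers_iff]
    constructor
    · rintro ⟨k, hk⟩
      exact ⟨k, Subtype.ext (by simpa using hk)⟩
    · rintro ⟨k, hk⟩
      exact ⟨k, by simpa using congrArg Subtype.val hk⟩
  haveI : ((Subgroup.zpowers g).subgroupOf Cs).FiniteIndex :=
    Subgroup.instFiniteIndex_subgroupOf _ _
  haveI : (Subgroup.zpowers gc).FiniteIndex := hzpg ▸ this
  haveI : (Subgroup.center Cs).FiniteIndex := Subgroup.finiteIndex_of_le hcenter_le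
  -- Cs is commutative via the transfer homomorphism
  have hinj : Function.Injective (MonoidHom.transferCenterPow Cs) := by
    rw [injective_iff_map_eq_one]
    intro a ha
    have h1 : (a : Cs) ^ (Subgroup.center Cs).index = 1 := by
      have := congrArg Subtype.val (ha)
      rwa [MonoidHom.transferCenterPow_apply] at this
    exact tfC a _ Subgroup.FiniteIndex.index_ne_zero h1
  have hcomm : ∀ a b : Cs, a * b = b * a := by
    intro a b
    apply hinj
    rw [map_mul, map_mul]
    exact Subtype.ext (Subgroup.mem_center_iff.mp (MonoidHom.transferCenterPow Cs b).2 _)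
  -- powers land in zpowers gc
  haveI : (Subgroup.zpowers gc).Normal := by
    constructor
    intro x hx t
    obtain ⟨k, hk⟩ := Subgroup.mem_zpowers_iff.mp hx
    refine Subgroup.mem_zpowers_iff.mpr ⟨k, ?_⟩
    rw [hk]
    have : t * x * t⁻¹ = x := by
      rw [hcomm t x]
      group
    rw [this]
  set m := (Subgroup.zpowers gc).index with hm
  have hm0 : m ≠ 0 := Subgroup.FiniteIndex.index_ne_zero
  have hpm : ∀ x : Cs, ∃ k : ℤ, x ^ m = gc ^ k := by
    intro x
    have := Subgroup.pow_index_mem (Subgroup.zpowers gc) x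
    obtain ⟨k, hk⟩ := Subgroup.mem_zpowers_iff.mp this
    exact ⟨k, hk.symm⟩
  -- the subgroup of exponents
  set R : AddSubgroup ℤ :=
    { carrier := {k : ℤ | ∃ x : Cs, x ^ m = gc ^ k}
      zero_mem' := ⟨1, by simp⟩
      add_mem' := by
        rintro k l ⟨x, hx⟩ ⟨y, hy⟩
        refine ⟨x * y, ?_⟩
        rw [(Commute.mul_pow (hcomm x y) m : (x*y)^m = x^m * y^m), hx, hy, ← zpow_add]
      neg_mem' := by
        rintro k ⟨x, hx⟩
        exact ⟨x⁻¹, by rw [inv_pow, hx, ← zpow_neg]⟩ } with hR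
  have hmR : (m : ℤ) ∈ R := ⟨gc, by rw [zpow_natCast]⟩
  obtain ⟨d, hd⟩ := Int.subgroup_cyclic R
  have hmemR : ∀ k : ℤ, k ∈ R ↔ ∃ j : ℤ, k = j * d := by
    intro k
    rw [hd, AddSubgroup.mem_closure_singleton]
    constructor
    · rintro ⟨j, hj⟩; exact ⟨j, by rw [← hj]; simp [smul_eq_mul]⟩
    · rintro ⟨j, hj⟩; exact ⟨j, by rw [hj]; simp [smul_eq_mul]⟩
  have hd0 : d ≠ 0 := by
    intro h
    obtain ⟨j, hj⟩ := (hmemR m).mp hmR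
    rw [h, mul_zero] at hj
    exact hm0 (by exact_mod_cast hj)
  obtain ⟨z, hz⟩ : ∃ x : Cs, x ^ m = gc ^ d := (hmemR d).mpr ⟨1, (one_mul d).symm⟩
  -- every element of Cs is a power of z
  have hZsurj : ∀ x : Cs, ∃ j : ℤ, x = z ^ j := by
    intro x
    obtain ⟨k, hk⟩ := hpm x
    obtain ⟨j, hjk⟩ := (hmemR k).mp ⟨x, hk⟩
    refine ⟨j, ?_⟩
    have h1 : (x * (z ^ j)⁻¹) ^ m = 1 := by
      rw [(Commute.mul_pow (hcomm x (z ^ j)⁻¹) m : (x * (z ^ j)⁻¹)^m = x^m * ((z ^ j)⁻¹)^m), hk,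
        inv_pow, ← zpow_natCast (z ^ j), ← zpow_mul]
      rw [mul_comm j (m : ℤ), zpow_mul, zpow_natCast, hz, ← zpow_mul, hjk]
      rw [mul_comm d j, ← zpow_neg, ← zpow_add]
      simp
    have := tfC _ m hm0 h1
    rw [mul_inv_eq_one] at this
    exact this
  have hz1 : (z : G₀) ≠ 1 := by
    intro h
    obtain ⟨j, hj⟩ := hZsurj gc
    rw [(Subtype.ext h : z = 1), one_zpow] at hj
    exact hg1 (congrArg Subtype.val hj)
  have hzinj := tf_inj _ hz1
  by_cases hC : ∀ t : G₀, t ∈ Cs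
  · refine ⟨(z : G₀), hzinj, ?_⟩
    intro x
    obtain ⟨j, hj⟩ := hZsurj ⟨x, hC x⟩
    exact ⟨j, by simpa using congrArg Subtype.val hj⟩
  · exfalso
    push_neg at hC
    obtain ⟨t, ht⟩ := hC
    have hct : c t = -1 := by
      rcases Int.isUnit_iff.mp (IsUnit.of_mul_eq_one _ (hc_mul_inv t)) with h | h
      · exact absurd ((hCs_mem t).mpr h) ht
      · exact h
    have h1 : t * (z : G₀) * t⁻¹ ∈ Cs := Subgroup.Normal.conj_mem (MonoidHom.normal_ker χ) _ z.2 t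
    obtain ⟨e, he⟩ := hZsurj ⟨_, h1⟩
    have he' : t * (z : G₀) * t⁻¹ = (z : G₀) ^ e := by simpa using congrArg Subtype.val he
    obtain ⟨k₀, hk₀⟩ := hZsurj gc
    have hgk : g = (z : G₀) ^ k₀ := by simpa using congrArg Subtype.val hk₀
    have hk₀0 : k₀ ≠ 0 := by intro h; rw [h, zpow_zero] at hgk; exact hg1 hgk
    have h2 : t * g * t⁻¹ = (z:G₀) ^ (e * k₀) := by
      rw [hgk, ← conj_zpow, he', ← zpow_mul]
    have h3 : t * g * t⁻¹ = g⁻¹ := by rw [hc t, hct, zpow_neg_one]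
    have he1 : e = -1 := by
      have heq : (z:G₀) ^ (e * k₀) = (z:G₀) ^ (-1 * k₀) := by
        rw [← h2, h3, hgk, ← zpow_neg, neg_one_mul]
      have := hzinj heq
      exact mul_right_cancel₀ hk₀0 this
    have htt : t * t ∈ Cs := (hCs_mem _).mpr (by rw [hc_mul, hct]; norm_num)
    obtain ⟨j, hj⟩ := hZsurj ⟨t*t, htt⟩
    have hj' : t * t = (z:G₀) ^ j := by simpa using congrArg Subtype.val hj
    have h4 : t * (t*t) * t⁻¹ = t*t := by group
    have h5 : t * (t*t) * t⁻¹ = (z:G₀) ^ (-j) := by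
      rw [hj', ← conj_zpow, he', ← zpow_mul, he1, neg_one_mul]
    have h6 : (z:G₀)^(-j) = (z:G₀)^j := by rw [← h5, h4, hj']
    have hj0 : j = 0 := by have := hzinj h6; omega
    have ht1 : t * t = 1 := by rw [hj', hj0, zpow_zero]
    have ht2 : t = 1 := tf_pow t 2 (by norm_num) (by rw [pow_two]; exact ht1)
    exact ht (ht2 ▸ Cs.one_mem)


/-- an infinite virtually cyclic group which is isomorphic to a semidirect
product `G₀ ⋊ ℤ/2` with `G₀` torsion-free is isomorphic to `ℤ × ℤ/2` or to the infinite
dihedral group `ℤ ⋊ ℤ/2`. -/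
theorem stmt_5 (G : Type) [Group G] [Infinite G]
    (hvc : ∃ H : Subgroup G, IsCyclic H ∧ H.FiniteIndex)
    (hw : Nonempty (TorsionFreeByZTwoWitness G)) :
    Nonempty (G ≃* Multiplicative ℤ × Multiplicative (ZMod 2)) ∨
      Nonempty (G ≃* InfiniteDihedral) := by
  classical
  obtain ⟨w⟩ := hw
  letI := w.grp
  -- `G₀` is infinite
  have eqv : G ≃ (w.G₀ × Multiplicative (ZMod 2)) :=
    w.iso.toEquiv.trans
      ⟨fun x => (x.left, x.right), fun p => ⟨p.1, p.2⟩, fun x => by cases x; rfl, fun p => rfl⟩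
  haveI : Infinite w.G₀ := by
    by_contra h
    haveI : Finite w.G₀ := not_infinite_iff_finite.mp h
    haveI : Finite G := Finite.of_equiv _ eqv.symm
    exact not_finite G
  -- `G₀` is virtually cyclic
  obtain ⟨H, hHc, hHf⟩ := hvc
  haveI := hHc; haveI := hHf
  set f : w.G₀ →* G := w.iso.symm.toMonoidHom.comp SemidirectProduct.inl with hf
  have hfinj : Function.Injective f :=
    w.iso.symm.injective.comp SemidirectProduct.inl_injective
  set K := H.normalCore with hK
  haveI : K.FiniteIndex := Subgroup.finiteIndex_normalCore H
  haveI : IsCyclic K := Subgroup.isCyclic_of_le H.normalCore_le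
  have hvc₀ : ∃ H0 : Subgroup w.G₀, IsCyclic H0 ∧ H0.FiniteIndex := by
    refine ⟨K.comap f, ?_, ?_⟩
    · haveI : IsCyclic (Subgroup.map f (K.comap f)) :=
        Subgroup.isCyclic_of_le (Subgroup.map_comap_le f K)
      exact isCyclic_of_surjective ((K.comap f).equivMapOfInjective f hfinj).symm
        (MulEquiv.surjective _)
    · constructor
      rw [Subgroup.index_comap]
      exact ne_zero_of_dvd_ne_zero Subgroup.FiniteIndex.index_ne_zero
        (Subgroup.relIndex_dvd_index_of_normal K f.range)
  -- `G₀ ≃* ℤ`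
  obtain ⟨z, hzinj, hzsurj⟩ := key_cyclic w.G₀ w.torsionFree hvc₀
  let Φ : Multiplicative ℤ →* w.G₀ :=
    { toFun := fun n => z ^ (Multiplicative.toAdd n)
      map_one' := by simp
      map_mul' := fun a b => by
        show z ^ (Multiplicative.toAdd a + Multiplicative.toAdd b) = _
        rw [zpow_add] }
  have hΦbij : Function.Bijective Φ := by
    constructor
    · intro a b hab
      have := hzinj hab
      exact Multiplicative.toAdd.injective this
    · intro x
      obtain ⟨n, hn⟩ := hzsurj x
      exact ⟨Multiplicative.ofAdd n, hn.symm⟩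
  let e : w.G₀ ≃* Multiplicative ℤ := (MulEquiv.ofBijective Φ hΦbij).symm
  -- transport the action
  let θ' : Multiplicative (ZMod 2) →* MulAut (Multiplicative ℤ) :=
    { toFun := fun a => (e.symm.trans (w.θ a)).trans e
      map_one' := by ext x; simp
      map_mul' := fun a b => by
        ext x
        simp [MulEquiv.trans_apply, map_mul, MulAut.mul_apply] }
  have hcompat : ∀ (a : Multiplicative (ZMod 2)) (n : w.G₀), e (w.θ a n) = θ' a (e n) := by
    intro a n
    show e (w.θ a n) = e (w.θ a (e.symm (e n)))
    rw [e.symm_apply_apply]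
  let iso1 : G ≃* (Multiplicative ℤ ⋊[θ'] Multiplicative (ZMod 2)) :=
    w.iso.trans (sdCongrLeft e w.θ θ' hcompat)
  rcases mulAutZ_classify (θ' (Multiplicative.ofAdd (1 : ZMod 2))) with hcase | hcase
  · left
    have htriv : ∀ (a : Multiplicative (ZMod 2)) (n : Multiplicative ℤ), θ' a n = n := by
      intro a n
      rcases zmod2_cases a with rfl | rfl
      · rw [map_one]; rfl
      · rw [hcase]; rfl
    exact ⟨iso1.trans (sdTrivialIso θ' htriv)⟩
  · right
    have hθeq : θ' = dihedralTwist := by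
      apply MonoidHom.ext
      intro a
      rcases zmod2_cases a with rfl | rfl
      · rw [map_one, map_one]
      · rw [hcase]
        show negAutZ = negAutZ ^ (Multiplicative.toAdd (Multiplicative.ofAdd (1 : ZMod 2))).val
        have : (Multiplicative.toAdd (Multiplicative.ofAdd (1 : ZMod 2))).val = 1 := rfl
        rw [this, pow_one]
    obtain ⟨Q⟩ := sd_congr_hom hθeq
    exact ⟨iso1.trans Q⟩
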